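/- Every uncountable subspace of a Lusin space is again a Lusin space. -/
import Mathlib

private lemma closed_diff_interior_nwd {X : Type*} [TopologicalSpace X] {s : Set X}
    (hs : IsClosed s) : IsNowhereDense (s \ interior s) := by
  have hclosed : IsClosed (s \ interior s) := hs.sdiff isOpen_interior
  unfold IsNowhereDense
  rw [hclosed.closure_eq]
  ext x
  simp only [Set.mem_empty_iff_false, iff_false]
  intro hx
  have h1 : x ∈ interior s := interior_mono Set.diff_subset hx
  exact (interior_subset hx).2 h1

theorem uncountable_subspace_of_lusin_is_lusin {X : Type*} [TopologicalSpace X]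
    [T2Space X]
    (h1 : ∀ N : Set X, IsNowhereDense N → N.Countable)
    (h2 : {x : X | IsOpen ({x} : Set X)}.Countable)
    (h3 : ¬ (Set.univ : Set X).Countable)
    (Y : Set X) (hY : ¬ Y.Countable) :
    (∀ N : Set Y, IsNowhereDense N → N.Countable) ∧
    {y : Y | IsOpen ({y} : Set Y)}.Countable ∧
    ¬ (Set.univ : Set Y).Countable := by
  refine ⟨?_, ?_, ?_⟩
  · intro N hN
    set N' : Set X := Subtype.val '' N with hN'def
    set D := closure N' with hD
    set U := interior D with hU
    -- N' is disjoint from U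
    have hdisj : N' ∩ U = ∅ := by
      by_contra h
      obtain ⟨x, hxN', hxU⟩ := Set.nonempty_iff_ne_empty.mpr h
      obtain ⟨y, hyN, rfl⟩ := hxN'
      have hysub : (Subtype.val ⁻¹' U : Set Y) ⊆ closure N := by
        intro z hz
        rw [closure_subtype]
        exact interior_subset hz
      have hyint : y ∈ interior (closure N) :=
        interior_maximal hysub (isOpen_interior.preimage continuous_subtype_val) hxU
      rw [hN] at hyint
      exact hyint
    have hsub : N' ⊆ D \ U := by
      intro x hx
      refine ⟨subset_closure hx, fun hxU => ?_⟩
      exact absurd (Set.mem_inter hx hxU) (by rw [hdisj]; exact Set.notMem_empty x)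
    have hcnt : N'.Countable :=
      ((h1 _ (closed_diff_interior_nwd isClosed_closure)).mono hsub)
    exact ((hcnt.preimage Subtype.val_injective).mono (Set.subset_preimage_image _ _))
  · set I : Set Y := {y : Y | IsOpen ({y} : Set Y)} with hI
    set I' : Set X := Subtype.val '' I with hI'
    set D := closure I' with hD
    set U := interior D with hU
    have hsplit : I' ⊆ (D \ U) ∪ {x : X | IsOpen ({x} : Set X)} := by
      intro x hx
      by_cases hxU : x ∈ U
      · right
        obtain ⟨y, hyI, rfl⟩ := hx
        obtain ⟨V, hVopen, hVeq⟩ := isOpen_induced_iff.mp hyI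
        -- show {↑y} = V ∩ U
        have key : V ∩ U = {(y : X)} := by
          apply Set.eq_singleton_iff_unique_mem.mpr
          constructor
          · exact ⟨by { have : y ∈ ({y} : Set Y) := rfl; rw [← hVeq] at this; exact this },
              hxU⟩
          · intro z ⟨hzV, hzU⟩
            by_contra hne
            have hWopen : IsOpen ((V ∩ U) \ {(y : X)}) :=
              (hVopen.inter isOpen_interior).sdiff isClosed_singleton
            have hz : z ∈ (V ∩ U) \ {(y : X)} := ⟨⟨hzV, hzU⟩, hne⟩
            have hzD : z ∈ closure I' := interior_subset hzU
            obtain ⟨w, hwW, hwI'⟩ := mem_closure_iff.mp hzD _ hWopen hz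
            obtain ⟨w', hw'I, rfl⟩ := hwI'
            have heq : w' = y := by
              have : w' ∈ ({y} : Set Y) := by rw [← hVeq]; exact hwW.1.1
              exact this
            exact hwW.2 (heq ▸ rfl)
        show IsOpen ({(y : X)} : Set X)
        rw [← key]
        exact hVopen.inter isOpen_interior
      · exact Or.inl ⟨subset_closure hx, hxU⟩
    have hcnt : I'.Countable :=
      (((h1 _ (closed_diff_interior_nwd isClosed_closure)).union h2).mono hsplit)
    exact ((hcnt.preimage Subtype.val_injective).mono (Set.subset_preimage_image _ _))
  · intro h
    exact hY (Set.countable_coe_iff.mpr (Set.countable_univ_iff.mp h)).to_set
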